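/- Let k ≥ 2, T_1, …, T_k > 0, let 1 ≤ α ≤ k−1 and 1 ≤ i ≤ n. Then (∂/∂w_i^α − ζ^i) G^{(k)} = −(\bar{w}_i^α / (4 T_α)) · G^{(k)}, where ∂/∂w_i^α is the Wirtinger derivative, ζ^i = (1/(T_1 + ⋯ + T_k)) Σ_{β=1}^{k−1} T_β ∂/∂w_i^β, and \bar{w} denotes complex conjugation. -/

import Mathlib

open MeasureTheory

/-- The Gaussian `G_T(x,z) = (4πT)^{−(2n+m)/2} exp(−(|x|²+|z|²)/(4T))` on `ℝ^m × ℂ^n`. -/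
noncomputable def gaussT (m n : ℕ) (T : ℝ) (p : (Fin m → ℝ) × (Fin n → ℂ)) : ℝ :=
  (4 * Real.pi * T) ^ (-((2 * (n : ℝ) + (m : ℝ)) / 2)) *
    Real.exp (-(((∑ j, (p.1 j) ^ 2) + ∑ i, Complex.normSq (p.2 i)) / (4 * T)))

/-- The product Gaussian
`G^{(k)}(q¹,…,q^{k−1}) = (∏_{α=1}^{k−1} G_{T_α}(q^α)) · G_{T_k}(Σ_α q^α)`
on `(ℝ^m × ℂ^n)^{k−1}`. -/
noncomputable def gaussProd (m n k : ℕ) (hk : 0 < k) (T : Fin k → ℝ)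
    (q : Fin (k - 1) → (Fin m → ℝ) × (Fin n → ℂ)) : ℝ :=
  (∏ α, gaussT m n (T (Fin.castLE (Nat.sub_le k 1) α)) (q α)) *
    gaussT m n (T ⟨k - 1, Nat.sub_lt hk one_pos⟩) (∑ α, q α)

/-- The Wirtinger derivative `∂F/∂w_i^α = (1/2)(∂F/∂u_i^α − i ∂F/∂v_i^α)` of a
real-valued function `F` on `(ℝ^m × ℂ^n)^{k−1}` in the complex coordinate
`w_i^α = u_i^α + i v_i^α`, expressed via directional (Fréchet) derivatives. -/
noncomputable def wirtingerDeriv (m n k : ℕ)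
    (F : (Fin (k - 1) → (Fin m → ℝ) × (Fin n → ℂ)) → ℝ)
    (q : Fin (k - 1) → (Fin m → ℝ) × (Fin n → ℂ))
    (α : Fin (k - 1)) (i : Fin n) : ℂ :=
  (1 / 2 : ℂ) *
    (((fderiv ℝ F q (Pi.single α ((0 : Fin m → ℝ), Pi.single i (1 : ℂ))) : ℝ) : ℂ)
      - Complex.I *
        ((fderiv ℝ F q (Pi.single α ((0 : Fin m → ℝ), Pi.single i Complex.I)) : ℝ) : ℂ))


open ContinuousLinearMap in
noncomputable def dA (m n : ℕ) (p : (Fin m → ℝ) × (Fin n → ℂ)) :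
    ((Fin m → ℝ) × (Fin n → ℂ)) →L[ℝ] ℝ :=
  (∑ j, (p.1 j • ((proj j).comp (fst ℝ (Fin m → ℝ) (Fin n → ℂ))) +
        p.1 j • ((proj j).comp (fst ℝ (Fin m → ℝ) (Fin n → ℂ))))) +
  ∑ i, (((p.2 i).re • (Complex.reCLM.comp ((proj i).comp (snd ℝ (Fin m → ℝ) (Fin n → ℂ)))) +
        (p.2 i).re • (Complex.reCLM.comp ((proj i).comp (snd ℝ (Fin m → ℝ) (Fin n → ℂ))))) +
        ((p.2 i).im • (Complex.imCLM.comp ((proj i).comp (snd ℝ (Fin m → ℝ) (Fin n → ℂ)))) +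
        (p.2 i).im • (Complex.imCLM.comp ((proj i).comp (snd ℝ (Fin m → ℝ) (Fin n → ℂ))))))

lemma hasFDerivAt_quad (m n : ℕ) (p : (Fin m → ℝ) × (Fin n → ℂ)) :
    HasFDerivAt (fun p : (Fin m → ℝ) × (Fin n → ℂ) =>
      (∑ j, (p.1 j) ^ 2) + ∑ i, Complex.normSq (p.2 i)) (dA m n p) p := by
  have hx : ∀ j : Fin m, HasFDerivAt (fun p : (Fin m → ℝ) × (Fin n → ℂ) => p.1 j)
      ((ContinuousLinearMap.proj j).comp (ContinuousLinearMap.fst ℝ (Fin m → ℝ) (Fin n → ℂ))) p :=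
    fun j => ((ContinuousLinearMap.proj j).comp
      (ContinuousLinearMap.fst ℝ (Fin m → ℝ) (Fin n → ℂ))).hasFDerivAt
  have hre : ∀ i : Fin n, HasFDerivAt (fun p : (Fin m → ℝ) × (Fin n → ℂ) => (p.2 i).re)
      (Complex.reCLM.comp ((ContinuousLinearMap.proj i).comp
        (ContinuousLinearMap.snd ℝ (Fin m → ℝ) (Fin n → ℂ)))) p :=
    fun i => (Complex.reCLM.comp ((ContinuousLinearMap.proj i).comp
      (ContinuousLinearMap.snd ℝ (Fin m → ℝ) (Fin n → ℂ)))).hasFDerivAt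
  have him : ∀ i : Fin n, HasFDerivAt (fun p : (Fin m → ℝ) × (Fin n → ℂ) => (p.2 i).im)
      (Complex.imCLM.comp ((ContinuousLinearMap.proj i).comp
        (ContinuousLinearMap.snd ℝ (Fin m → ℝ) (Fin n → ℂ)))) p :=
    fun i => (Complex.imCLM.comp ((ContinuousLinearMap.proj i).comp
      (ContinuousLinearMap.snd ℝ (Fin m → ℝ) (Fin n → ℂ)))).hasFDerivAt
  simp only [pow_two, Complex.normSq_apply]
  exact HasFDerivAt.add
    (HasFDerivAt.fun_sum fun j _ => (hx j).mul (hx j))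
    (HasFDerivAt.fun_sum fun i _ => ((hre i).mul (hre i)).add ((him i).mul (him i)))

lemma hasFDerivAt_gaussT (m n : ℕ) (T : ℝ) (p : (Fin m → ℝ) × (Fin n → ℂ)) :
    HasFDerivAt (gaussT m n T) ((gaussT m n T p * (-(4 * T)⁻¹)) • dA m n p) p := by
  have h1 : HasFDerivAt (fun p : (Fin m → ℝ) × (Fin n → ℂ) =>
      -(((∑ j, (p.1 j) ^ 2) + ∑ i, Complex.normSq (p.2 i)) / (4 * T)))
      ((-(4 * T)⁻¹) • dA m n p) p := by
    have heq : (fun p : (Fin m → ℝ) × (Fin n → ℂ) =>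
        -(((∑ j, (p.1 j) ^ 2) + ∑ i, Complex.normSq (p.2 i)) / (4 * T)))
        = fun p : (Fin m → ℝ) × (Fin n → ℂ) =>
          (-(4 * T)⁻¹) * ((∑ j, (p.1 j) ^ 2) + ∑ i, Complex.normSq (p.2 i)) := by
      funext p; ring
    rw [heq]
    exact (hasFDerivAt_quad m n p).const_mul _
  have h2 := (h1.exp).const_mul ((4 * Real.pi * T) ^ (-((2 * (n : ℝ) + (m : ℝ)) / 2)))
  have : HasFDerivAt (gaussT m n T)
      (((4 * Real.pi * T) ^ (-((2 * (n : ℝ) + (m : ℝ)) / 2))) •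
        (Real.exp (-(((∑ j, (p.1 j) ^ 2) + ∑ i, Complex.normSq (p.2 i)) / (4 * T))) •
          ((-(4 * T)⁻¹) • dA m n p))) p := h2
  convert this using 1
  rw [smul_smul, smul_smul]
  congr 1


lemma dA_single (m n : ℕ) (p : (Fin m → ℝ) × (Fin n → ℂ)) (i : Fin n) (c : ℂ) :
    dA m n p ((0 : Fin m → ℝ), Pi.single i c) =
      2 * ((p.2 i).re * c.re + (p.2 i).im * c.im) := by
  simp only [dA, ContinuousLinearMap.add_apply, ContinuousLinearMap.coe_sum',
    Finset.sum_apply, ContinuousLinearMap.smul_apply, ContinuousLinearMap.comp_apply,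
    ContinuousLinearMap.proj_apply, ContinuousLinearMap.coe_fst', ContinuousLinearMap.coe_snd',
    Complex.reCLM_apply, Complex.imCLM_apply, smul_eq_mul, Pi.zero_apply, mul_zero, add_zero,
    Pi.single_apply]
  rw [Finset.sum_const_zero, zero_add, Finset.sum_eq_single i ?_ ?_]
  · simp; ring
  · intro b _ hb; simp [hb]
  · intro h; exact absurd (Finset.mem_univ i) h

lemma fderiv_gaussProd_single (m n k : ℕ) (hk : 0 < k) (T : Fin k → ℝ)
    (q : Fin (k - 1) → (Fin m → ℝ) × (Fin n → ℂ)) (β : Fin (k - 1)) (i : Fin n) (c : ℂ) :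
    fderiv ℝ (gaussProd m n k hk T) q (Pi.single β ((0 : Fin m → ℝ), Pi.single i c))
      = gaussProd m n k hk T q *
        (-(4 * T (Fin.castLE (Nat.sub_le k 1) β))⁻¹ *
            (2 * (((q β).2 i).re * c.re + ((q β).2 i).im * c.im))
          + -(4 * T ⟨k - 1, Nat.sub_lt hk one_pos⟩)⁻¹ *
            (2 * (((∑ γ, q γ).2 i).re * c.re + ((∑ γ, q γ).2 i).im * c.im))) := by
  classical
  set Tl := T ⟨k - 1, Nat.sub_lt hk one_pos⟩ with hTl
  set sumCLM : (Fin (k - 1) → (Fin m → ℝ) × (Fin n → ℂ)) →L[ℝ] ((Fin m → ℝ) × (Fin n → ℂ)) :=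
    ∑ γ : Fin (k - 1), ContinuousLinearMap.proj γ with hsum
  have hsumfun : ∀ q' : Fin (k - 1) → (Fin m → ℝ) × (Fin n → ℂ), sumCLM q' = ∑ γ, q' γ := by
    intro q'; simp [hsum]
  have hproj : ∀ γ : Fin (k - 1), HasFDerivAt (fun q' : Fin (k - 1) → (Fin m → ℝ) × (Fin n → ℂ) => q' γ)
      (ContinuousLinearMap.proj γ : (Fin (k - 1) → (Fin m → ℝ) × (Fin n → ℂ)) →L[ℝ] ((Fin m → ℝ) × (Fin n → ℂ))) q := fun γ =>
    (ContinuousLinearMap.proj γ : (Fin (k - 1) → (Fin m → ℝ) × (Fin n → ℂ)) →L[ℝ] ((Fin m → ℝ) × (Fin n → ℂ))).hasFDerivAt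
  have hprod : HasFDerivAt
      (fun q' : Fin (k - 1) → (Fin m → ℝ) × (Fin n → ℂ) => ∏ γ, gaussT m n (T (Fin.castLE (Nat.sub_le k 1) γ)) (q' γ))
      (∑ γ, (∏ δ ∈ Finset.univ.erase γ,
          gaussT m n (T (Fin.castLE (Nat.sub_le k 1) δ)) (q δ)) •
        (((gaussT m n (T (Fin.castLE (Nat.sub_le k 1) γ)) (q γ) *
            (-(4 * T (Fin.castLE (Nat.sub_le k 1) γ))⁻¹)) • dA m n (q γ)).comp
          (ContinuousLinearMap.proj γ))) q :=
    HasFDerivAt.finset_prod (fun γ _ =>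
      ((hasFDerivAt_gaussT m n (T (Fin.castLE (Nat.sub_le k 1) γ)) (q γ)).comp q (hproj γ) :
        HasFDerivAt (gaussT m n (T (Fin.castLE (Nat.sub_le k 1) γ)) ∘ fun q' => q' γ) _ q))
  have hlast : HasFDerivAt
      (fun q' : Fin (k - 1) → (Fin m → ℝ) × (Fin n → ℂ) => gaussT m n Tl (∑ γ, q' γ))
      (((gaussT m n Tl (∑ γ, q γ) * (-(4 * Tl)⁻¹)) • dA m n (∑ γ, q γ)).comp sumCLM) q := by
    have h1 := (hasFDerivAt_gaussT m n Tl (sumCLM q)).comp q sumCLM.hasFDerivAt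
    rw [hsumfun q] at h1
    have hfun : (fun q' : Fin (k - 1) → (Fin m → ℝ) × (Fin n → ℂ) => gaussT m n Tl (∑ γ, q' γ))
        = gaussT m n Tl ∘ ⇑sumCLM := by
      funext q'; simp [Function.comp, hsumfun]
    rw [hfun]
    exact h1
  have htotal : HasFDerivAt (fun q' : Fin (k - 1) → (Fin m → ℝ) × (Fin n → ℂ) =>
      (∏ γ, gaussT m n (T (Fin.castLE (Nat.sub_le k 1) γ)) (q' γ)) *
        gaussT m n Tl (∑ γ, q' γ)) _ q := hprod.mul hlast
  have hfun2 : gaussProd m n k hk T = fun q' : Fin (k - 1) → (Fin m → ℝ) × (Fin n → ℂ) =>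
      (∏ γ, gaussT m n (T (Fin.castLE (Nat.sub_le k 1) γ)) (q' γ)) *
        gaussT m n Tl (∑ γ, q' γ) := rfl
  rw [hfun2, htotal.fderiv]
  simp only [ContinuousLinearMap.add_apply, ContinuousLinearMap.smul_apply,
    ContinuousLinearMap.comp_apply, ContinuousLinearMap.coe_sum', Finset.sum_apply,
    ContinuousLinearMap.proj_apply, smul_eq_mul]
  rw [hsumfun]
  have hv : (∑ γ : Fin (k - 1), (Pi.single β ((0 : Fin m → ℝ), Pi.single i c) :
      Fin (k - 1) → (Fin m → ℝ) × (Fin n → ℂ)) γ) = ((0 : Fin m → ℝ), Pi.single i c) := by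
    simp [Pi.single_apply]
  rw [hv, dA_single]
  have hcollapse : (∑ γ, (∏ δ ∈ Finset.univ.erase γ,
          gaussT m n (T (Fin.castLE (Nat.sub_le k 1) δ)) (q δ)) *
        ((gaussT m n (T (Fin.castLE (Nat.sub_le k 1) γ)) (q γ) *
            -(4 * T (Fin.castLE (Nat.sub_le k 1) γ))⁻¹) *
          dA m n (q γ) ((Pi.single β ((0 : Fin m → ℝ), Pi.single i c) :
            Fin (k - 1) → (Fin m → ℝ) × (Fin n → ℂ)) γ)))
      = (∏ δ ∈ Finset.univ.erase β,
          gaussT m n (T (Fin.castLE (Nat.sub_le k 1) δ)) (q δ)) *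
        ((gaussT m n (T (Fin.castLE (Nat.sub_le k 1) β)) (q β) *
            -(4 * T (Fin.castLE (Nat.sub_le k 1) β))⁻¹) *
          (2 * (((q β).2 i).re * c.re + ((q β).2 i).im * c.im))) := by
    rw [Finset.sum_eq_single β]
    · rw [Pi.single_eq_same, dA_single]
    · intro γ _ hγ
      rw [Pi.single_eq_of_ne hγ]
      simp
    · intro h; exact absurd (Finset.mem_univ β) h
  rw [hcollapse]
  rw [show (∏ δ ∈ Finset.univ.erase β,
      gaussT m n (T (Fin.castLE (Nat.sub_le k 1) δ)) (q δ)) *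
        ((gaussT m n (T (Fin.castLE (Nat.sub_le k 1) β)) (q β) *
            -(4 * T (Fin.castLE (Nat.sub_le k 1) β))⁻¹) *
          (2 * (((q β).2 i).re * c.re + ((q β).2 i).im * c.im)))
      = ((∏ δ ∈ Finset.univ.erase β,
          gaussT m n (T (Fin.castLE (Nat.sub_le k 1) δ)) (q δ)) *
          gaussT m n (T (Fin.castLE (Nat.sub_le k 1) β)) (q β)) *
        (-(4 * T (Fin.castLE (Nat.sub_le k 1) β))⁻¹ *
          (2 * (((q β).2 i).re * c.re + ((q β).2 i).im * c.im))) from by ring]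
  rw [Finset.prod_erase_mul _ _ (Finset.mem_univ β)]
  ring

lemma hconj (z : ℂ) : (starRingEnd ℂ) z = (z.re : ℂ) - (z.im : ℂ) * Complex.I := by
  simp [Complex.ext_iff]


lemma wirt (m n k : ℕ) (hk : 0 < k) (T : Fin k → ℝ)
    (q : Fin (k - 1) → (Fin m → ℝ) × (Fin n → ℂ)) (β : Fin (k - 1)) (i : Fin n) :
    wirtingerDeriv m n k (gaussProd m n k hk T) q β i
      = -((starRingEnd ℂ) ((q β).2 i) / (4 * (T (Fin.castLE (Nat.sub_le k 1) β) : ℂ))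
          + (starRingEnd ℂ) ((∑ γ, q γ).2 i) / (4 * (T ⟨k - 1, Nat.sub_lt hk one_pos⟩ : ℂ)))
        * ((gaussProd m n k hk T q : ℝ) : ℂ) := by
  unfold wirtingerDeriv
  rw [fderiv_gaussProd_single m n k hk T q β i 1, fderiv_gaussProd_single m n k hk T q β i Complex.I]
  simp only [Complex.one_re, Complex.one_im, Complex.I_re, Complex.I_im, mul_one, mul_zero,
    add_zero, zero_add, hconj]
  push_cast
  ring


lemma fin_sum_split {M : Type*} [AddCommMonoid M] (k : ℕ) (hk : 0 < k) (f : Fin k → M) :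
    ∑ γ, f γ = (∑ β : Fin (k - 1), f (Fin.castLE (Nat.sub_le k 1) β))
      + f ⟨k - 1, Nat.sub_lt hk one_pos⟩ := by
  cases k with
  | zero => exact absurd hk (lt_irrefl _)
  | succ k' =>
    rw [Fin.sum_univ_castSucc]
    congr 1


/-- For `k ≥ 2`, `T₁, …, T_k > 0`, `1 ≤ α ≤ k−1`, `1 ≤ i ≤ n`,
`(∂/∂w_i^α − ζ^i) G^{(k)} = −(w̄_i^α/(4T_α)) · G^{(k)}`, where
`ζ^i = (1/(T₁+⋯+T_k)) Σ_{β=1}^{k−1} T_β ∂/∂w_i^β`. -/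
theorem wirtinger_minus_zeta_gaussProd (m n k : ℕ) (hk : 2 ≤ k) (T : Fin k → ℝ)
    (hT : ∀ i, 0 < T i) (α : Fin (k - 1)) (i : Fin n)
    (q : Fin (k - 1) → (Fin m → ℝ) × (Fin n → ℂ)) :
    wirtingerDeriv m n k (gaussProd m n k (by omega) T) q α i
        - (((∑ γ, T γ : ℝ) : ℂ))⁻¹ *
            ∑ β : Fin (k - 1), (T (Fin.castLE (Nat.sub_le k 1) β) : ℂ) *
              wirtingerDeriv m n k (gaussProd m n k (by omega) T) q β i
      = -((starRingEnd ℂ) ((q α).2 i) / (4 * (T (Fin.castLE (Nat.sub_le k 1) α) : ℂ)))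
          * ((gaussProd m n k (by omega) T q : ℝ) : ℂ) := by
  classical
  have hk0 : 0 < k := by omega
  simp only [wirt m n k (by omega) T q]
  have hS : (starRingEnd ℂ) ((∑ γ, q γ).2 i)
      = ∑ β : Fin (k - 1), (starRingEnd ℂ) ((q β).2 i) := by
    rw [Prod.snd_sum, Finset.sum_apply, map_sum]
  rw [hS]
  set a : Fin (k - 1) → ℂ := fun β => (T (Fin.castLE (Nat.sub_le k 1) β) : ℂ) with hadef
  set b : ℂ := (T ⟨k - 1, Nat.sub_lt (by omega : 0 < k) one_pos⟩ : ℂ) with hbdef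
  set W : Fin (k - 1) → ℂ := fun β => (starRingEnd ℂ) ((q β).2 i) with hWdef
  set G : ℂ := ((gaussProd m n k (by omega : 0 < k) T q : ℝ) : ℂ) with hGdef
  have haz : ∀ β, a β ≠ 0 := fun β => Complex.ofReal_ne_zero.mpr (ne_of_gt (hT _))
  have hbz : b ≠ 0 := Complex.ofReal_ne_zero.mpr (ne_of_gt (hT _))
  have hTsum : ((∑ γ, T γ : ℝ) : ℂ) = (∑ β, a β) + b := by
    rw [fin_sum_split k hk0 T]
    push_cast
    rfl
  have hsumz : ((∑ γ, T γ : ℝ) : ℂ) ≠ 0 :=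
    Complex.ofReal_ne_zero.mpr (ne_of_gt (Finset.sum_pos (fun γ _ => hT γ)
      ⟨⟨0, by omega⟩, Finset.mem_univ _⟩))
  have habz : (∑ β, a β) + b ≠ 0 := hTsum ▸ hsumz
  have hterm : ∀ β ∈ Finset.univ, a β * (-(W β / (4 * a β) + (∑ δ, W δ) / (4 * b)) * G)
      = -(W β / 4 + a β * ((∑ δ, W δ) / (4 * b))) * G := fun β _ => by
    have h := haz β
    field_simp
  rw [Finset.sum_congr rfl hterm, ← Finset.sum_mul]
  have hsum2 : (∑ β, -(W β / 4 + a β * ((∑ δ, W δ) / (4 * b))))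
      = -((∑ β, W β) / 4 + (∑ β, a β) * ((∑ δ, W δ) / (4 * b))) := by
    simp only [neg_add, Finset.sum_add_distrib, Finset.sum_neg_distrib,
      ← Finset.sum_div, ← Finset.sum_mul]
  rw [hsum2, hTsum]
  have hkey : (∑ β, W β) / 4 + (∑ β, a β) * ((∑ δ, W δ) / (4 * b))
      = ((∑ β, a β) + b) * ((∑ δ, W δ) / (4 * b)) := by
    field_simp
    ring
  rw [hkey]
  have h2 : ((∑ β, a β) + b)⁻¹ * (-(((∑ β, a β) + b) * ((∑ δ, W δ) / (4 * b))) * G)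
      = -((∑ δ, W δ) / (4 * b)) * G := by
    rw [neg_mul, mul_neg, ← mul_assoc, ← mul_assoc, inv_mul_cancel₀ habz, one_mul]
    ring
  rw [h2]
  ring
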